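/- Continuous equivalence transformations (Theorem 1): Let α₀ > 0, α₃ > 0, and α₁, α₂, t₀, x₀, y₀ be real numbers with α₁² + α₂² ≠ 0. Set λ = (α₁² + α₂²)/α₀, let σ : ℝ² → ℝ² be the invertible linear map σ(x,y) = (α₁x + α₂y, −α₂x + α₁y), and let T : ℝ³ → ℝ³ be the affine bijection T(t,x,y) = (α₀t + t₀, α₁x + α₂y + x₀, −α₂x + α₁y + y₀). Suppose (u, v, w) solves the system S(Ψ; d₁,d₂,d₃; k) on ℝ³. Define u* = α₃·(u ∘ T⁻¹), v* = α₃·(v ∘ T⁻¹), w* = α₃·(w ∘ T⁻¹), and Ψ*(X,Y) = λ·Ψ(σ⁻¹(X − x₀, Y − y₀)). Then (u*, v*, w*) solves the system S(Ψ*; λd₁, λd₂, λd₃; k/(α₀α₃)) on ℝ³. -/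

import Mathlib

/-- Partial derivative with respect to `t` of a function of `(t,x,y)`. -/
noncomputable def pdT (f : ℝ × ℝ × ℝ → ℝ) (p : ℝ × ℝ × ℝ) : ℝ := fderiv ℝ f p (1, 0, 0)
/-- Partial derivative with respect to `x`. -/
noncomputable def pdX (f : ℝ × ℝ × ℝ → ℝ) (p : ℝ × ℝ × ℝ) : ℝ := fderiv ℝ f p (0, 1, 0)
/-- Partial derivative with respect to `y`. -/
noncomputable def pdY (f : ℝ × ℝ × ℝ → ℝ) (p : ℝ × ℝ × ℝ) : ℝ := fderiv ℝ f p (0, 0, 1)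
/-- `Ψ_x` for a function of `(x,y)`. -/
noncomputable def psiX (Ψ : ℝ × ℝ → ℝ) (q : ℝ × ℝ) : ℝ := fderiv ℝ Ψ q (1, 0)
/-- `Ψ_y` for a function of `(x,y)`. -/
noncomputable def psiY (Ψ : ℝ × ℝ → ℝ) (q : ℝ × ℝ) : ℝ := fderiv ℝ Ψ q (0, 1)

/-- `(u,v,w)` solves the convective Lotka–Volterra system `S(Ψ; d₁,d₂,d₃; k)` on `Ω`. -/
def SolvesS (Ψ : ℝ × ℝ → ℝ) (d₁ d₂ d₃ k : ℝ) (u v w : ℝ × ℝ × ℝ → ℝ)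
    (Ω : Set (ℝ × ℝ × ℝ)) : Prop :=
  ∀ p ∈ Ω,
    (pdT u p + psiY Ψ p.2 * pdX u p - psiX Ψ p.2 * pdY u p
      = d₁ * (pdX (pdX u) p + pdY (pdY u) p) - k * u p * v p) ∧
    (pdT v p + psiY Ψ p.2 * pdX v p - psiX Ψ p.2 * pdY v p
      = d₂ * (pdX (pdX v) p + pdY (pdY v) p) - k * u p * v p) ∧
    (pdT w p + psiY Ψ p.2 * pdX w p - psiX Ψ p.2 * pdY w p
      = d₃ * (pdX (pdX w) p + pdY (pdY w) p) + k * u p * v p)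

/-- The inverse of the rotation-dilation `σ(x,y) = (α₁x+α₂y, −α₂x+α₁y)`. -/
noncomputable def sigmaInv (α₁ α₂ : ℝ) (q : ℝ × ℝ) : ℝ × ℝ :=
  ((α₁ * q.1 - α₂ * q.2) / (α₁ ^ 2 + α₂ ^ 2), (α₂ * q.1 + α₁ * q.2) / (α₁ ^ 2 + α₂ ^ 2))

/-- The inverse of the affine bijection
`T(t,x,y) = (α₀t+t₀, α₁x+α₂y+x₀, −α₂x+α₁y+y₀)`. -/
noncomputable def Tinv (α₀ α₁ α₂ t₀ x₀ y₀ : ℝ) (p : ℝ × ℝ × ℝ) : ℝ × ℝ × ℝ :=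
  ((p.1 - t₀) / α₀, sigmaInv α₁ α₂ (p.2.1 - x₀, p.2.2 - y₀))

/-- Linear part of `Tinv`. -/
noncomputable def Lmap (α₀ α₁ α₂ : ℝ) : (ℝ × ℝ × ℝ) →L[ℝ] (ℝ × ℝ × ℝ) :=
  letI fx : (ℝ × ℝ × ℝ) →L[ℝ] ℝ := (ContinuousLinearMap.fst ℝ ℝ ℝ).comp (ContinuousLinearMap.snd ℝ ℝ (ℝ × ℝ))
  letI fy : (ℝ × ℝ × ℝ) →L[ℝ] ℝ := (ContinuousLinearMap.snd ℝ ℝ ℝ).comp (ContinuousLinearMap.snd ℝ ℝ (ℝ × ℝ))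
  ((α₀⁻¹) • ContinuousLinearMap.fst ℝ ℝ (ℝ × ℝ)).prod
    (((α₁ / (α₁ ^ 2 + α₂ ^ 2)) • fx + (-(α₂ / (α₁ ^ 2 + α₂ ^ 2))) • fy).prod
      ((α₂ / (α₁ ^ 2 + α₂ ^ 2)) • fx + (α₁ / (α₁ ^ 2 + α₂ ^ 2)) • fy))

lemma Lmap_apply (α₀ α₁ α₂ : ℝ) (e : ℝ × ℝ × ℝ) :
    Lmap α₀ α₁ α₂ e = (e.1 / α₀,
      (α₁ * e.2.1 - α₂ * e.2.2) / (α₁ ^ 2 + α₂ ^ 2),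
      (α₂ * e.2.1 + α₁ * e.2.2) / (α₁ ^ 2 + α₂ ^ 2)) := by
  simp [Lmap, Prod.ext_iff]
  refine ⟨by ring, by ring, by ring⟩

lemma hasFDerivAt_Tinv (α₀ α₁ α₂ t₀ x₀ y₀ : ℝ) (p : ℝ × ℝ × ℝ) :
    HasFDerivAt (Tinv α₀ α₁ α₂ t₀ x₀ y₀) (Lmap α₀ α₁ α₂) p := by
  have : Tinv α₀ α₁ α₂ t₀ x₀ y₀ = fun p => Lmap α₀ α₁ α₂ p +
      (-(t₀ / α₀), (-(α₁ * x₀) + α₂ * y₀) / (α₁ ^ 2 + α₂ ^ 2),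
        (-(α₂ * x₀) - α₁ * y₀) / (α₁ ^ 2 + α₂ ^ 2)) := by
    funext p
    simp [Tinv, sigmaInv, Lmap_apply, Prod.ext_iff]
    refine ⟨by ring, by ring, by ring⟩
  rw [this]
  exact (Lmap α₀ α₁ α₂).hasFDerivAt.add_const _

lemma differentiable_Tinv (α₀ α₁ α₂ t₀ x₀ y₀ : ℝ) :
    Differentiable ℝ (Tinv α₀ α₁ α₂ t₀ x₀ y₀) :=
  fun p => (hasFDerivAt_Tinv α₀ α₁ α₂ t₀ x₀ y₀ p).differentiableAt

lemma fderiv_eval3 (f : ℝ × ℝ × ℝ → ℝ) (q : ℝ × ℝ × ℝ) (a b c : ℝ) :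
    fderiv ℝ f q (a, b, c) = a * pdT f q + b * pdX f q + c * pdY f q := by
  have habc : (a, b, c) = a • ((1:ℝ), (0:ℝ), (0:ℝ)) + b • ((0:ℝ), (1:ℝ), (0:ℝ))
      + c • ((0:ℝ), (0:ℝ), (1:ℝ)) := by
    simp [Prod.ext_iff]
  rw [habc, map_add, map_add, map_smul, map_smul, map_smul]
  simp [pdT, pdX, pdY]

/-- Master chain-rule formula for `c • (f ∘ Tinv)`. -/
lemma pd_formula (α₀ α₁ α₂ t₀ x₀ y₀ c : ℝ) (f : ℝ × ℝ × ℝ → ℝ) (hf : Differentiable ℝ f)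
    (p e : ℝ × ℝ × ℝ) :
    fderiv ℝ (fun p => c * f (Tinv α₀ α₁ α₂ t₀ x₀ y₀ p)) p e
      = c * (e.1 / α₀ * pdT f (Tinv α₀ α₁ α₂ t₀ x₀ y₀ p)
          + (α₁ * e.2.1 - α₂ * e.2.2) / (α₁ ^ 2 + α₂ ^ 2) * pdX f (Tinv α₀ α₁ α₂ t₀ x₀ y₀ p)
          + (α₂ * e.2.1 + α₁ * e.2.2) / (α₁ ^ 2 + α₂ ^ 2) * pdY f (Tinv α₀ α₁ α₂ t₀ x₀ y₀ p)) := by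
  have hT := hasFDerivAt_Tinv α₀ α₁ α₂ t₀ x₀ y₀ p
  have h2 : HasFDerivAt (fun p => c * f (Tinv α₀ α₁ α₂ t₀ x₀ y₀ p))
      (c • ((fderiv ℝ f (Tinv α₀ α₁ α₂ t₀ x₀ y₀ p)).comp (Lmap α₀ α₁ α₂))) p :=
    ((hf _).hasFDerivAt.comp p hT).const_mul c
  rw [h2.fderiv]
  simp only [ContinuousLinearMap.smul_apply, ContinuousLinearMap.comp_apply, smul_eq_mul]
  rw [Lmap_apply, fderiv_eval3]

lemma pd_app_add (g h : ℝ × ℝ × ℝ → ℝ) (p : ℝ × ℝ × ℝ)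
    (hg : DifferentiableAt ℝ g p) (hh : DifferentiableAt ℝ h p) (e : ℝ × ℝ × ℝ) :
    fderiv ℝ (fun p => g p + h p) p e = fderiv ℝ g p e + fderiv ℝ h p e := by
  rw [fderiv_fun_add hg hh]; rfl

/-- 2D analogue for the stream function. -/
noncomputable def Mmap (α₁ α₂ : ℝ) : (ℝ × ℝ) →L[ℝ] (ℝ × ℝ) :=
  letI fx : (ℝ × ℝ) →L[ℝ] ℝ := ContinuousLinearMap.fst ℝ ℝ ℝ
  letI fy : (ℝ × ℝ) →L[ℝ] ℝ := ContinuousLinearMap.snd ℝ ℝ ℝ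
  ((α₁ / (α₁ ^ 2 + α₂ ^ 2)) • fx + (-(α₂ / (α₁ ^ 2 + α₂ ^ 2))) • fy).prod
    ((α₂ / (α₁ ^ 2 + α₂ ^ 2)) • fx + (α₁ / (α₁ ^ 2 + α₂ ^ 2)) • fy)

lemma Mmap_apply (α₁ α₂ : ℝ) (e : ℝ × ℝ) :
    Mmap α₁ α₂ e = ((α₁ * e.1 - α₂ * e.2) / (α₁ ^ 2 + α₂ ^ 2),
      (α₂ * e.1 + α₁ * e.2) / (α₁ ^ 2 + α₂ ^ 2)) := by
  simp [Mmap, Prod.ext_iff]; constructor <;> ring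

lemma hasFDerivAt_shift (α₁ α₂ x₀ y₀ : ℝ) (q : ℝ × ℝ) :
    HasFDerivAt (fun q : ℝ × ℝ => sigmaInv α₁ α₂ (q.1 - x₀, q.2 - y₀)) (Mmap α₁ α₂) q := by
  have : (fun q : ℝ × ℝ => sigmaInv α₁ α₂ (q.1 - x₀, q.2 - y₀))
      = fun q => Mmap α₁ α₂ q + sigmaInv α₁ α₂ (-x₀, -y₀) := by
    funext q
    simp [sigmaInv, Mmap_apply, Prod.ext_iff]
    constructor <;> ring
  rw [this]
  exact (Mmap α₁ α₂).hasFDerivAt.add_const _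

lemma fderiv_eval2 (f : ℝ × ℝ → ℝ) (q : ℝ × ℝ) (a b : ℝ) :
    fderiv ℝ f q (a, b) = a * psiX f q + b * psiY f q := by
  have hab : (a, b) = a • ((1:ℝ), (0:ℝ)) + b • ((0:ℝ), (1:ℝ)) := by
    simp [Prod.ext_iff]
  rw [hab, map_add, map_smul, map_smul]
  simp [psiX, psiY]

lemma psi_formula (α₁ α₂ x₀ y₀ c : ℝ) (Ψ : ℝ × ℝ → ℝ) (hΨ : Differentiable ℝ Ψ)
    (q e : ℝ × ℝ) :
    fderiv ℝ (fun q : ℝ × ℝ => c * Ψ (sigmaInv α₁ α₂ (q.1 - x₀, q.2 - y₀))) q e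
      = c * ((α₁ * e.1 - α₂ * e.2) / (α₁ ^ 2 + α₂ ^ 2)
            * psiX Ψ (sigmaInv α₁ α₂ (q.1 - x₀, q.2 - y₀))
          + (α₂ * e.1 + α₁ * e.2) / (α₁ ^ 2 + α₂ ^ 2)
            * psiY Ψ (sigmaInv α₁ α₂ (q.1 - x₀, q.2 - y₀))) := by
  have hT := hasFDerivAt_shift α₁ α₂ x₀ y₀ q
  have h2 : HasFDerivAt (fun q : ℝ × ℝ => c * Ψ (sigmaInv α₁ α₂ (q.1 - x₀, q.2 - y₀)))
      (c • ((fderiv ℝ Ψ (sigmaInv α₁ α₂ (q.1 - x₀, q.2 - y₀))).comp (Mmap α₁ α₂))) q :=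
    ((hΨ _).hasFDerivAt.comp q hT).const_mul c
  rw [h2.fderiv]
  simp only [ContinuousLinearMap.smul_apply, ContinuousLinearMap.comp_apply, smul_eq_mul]
  rw [Mmap_apply, fderiv_eval2]

/-- All first and second derivative data for `F = α₃ • (f ∘ Tinv)`. -/
lemma transformed_pds (α₀ α₁ α₂ t₀ x₀ y₀ α₃ : ℝ) (hs : α₁ ^ 2 + α₂ ^ 2 ≠ 0)
    (f : ℝ × ℝ × ℝ → ℝ) (hf : ContDiff ℝ 2 f) (p : ℝ × ℝ × ℝ) :
    pdT (fun p => α₃ * f (Tinv α₀ α₁ α₂ t₀ x₀ y₀ p)) p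
        = α₃ * pdT f (Tinv α₀ α₁ α₂ t₀ x₀ y₀ p) / α₀ ∧
    pdX (fun p => α₃ * f (Tinv α₀ α₁ α₂ t₀ x₀ y₀ p)) p
        = α₃ * (α₁ * pdX f (Tinv α₀ α₁ α₂ t₀ x₀ y₀ p)
            + α₂ * pdY f (Tinv α₀ α₁ α₂ t₀ x₀ y₀ p)) / (α₁ ^ 2 + α₂ ^ 2) ∧
    pdY (fun p => α₃ * f (Tinv α₀ α₁ α₂ t₀ x₀ y₀ p)) p
        = α₃ * (-(α₂ * pdX f (Tinv α₀ α₁ α₂ t₀ x₀ y₀ p))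
            + α₁ * pdY f (Tinv α₀ α₁ α₂ t₀ x₀ y₀ p)) / (α₁ ^ 2 + α₂ ^ 2) ∧
    pdX (pdX (fun p => α₃ * f (Tinv α₀ α₁ α₂ t₀ x₀ y₀ p))) p
        + pdY (pdY (fun p => α₃ * f (Tinv α₀ α₁ α₂ t₀ x₀ y₀ p))) p
        = α₃ * (pdX (pdX f) (Tinv α₀ α₁ α₂ t₀ x₀ y₀ p)
            + pdY (pdY f) (Tinv α₀ α₁ α₂ t₀ x₀ y₀ p)) / (α₁ ^ 2 + α₂ ^ 2) := by
  have hfd : Differentiable ℝ f := hf.differentiable (by norm_num)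
  have hg1c : ContDiff ℝ 1 (pdX f) := by
    have h1 : ContDiff ℝ 1 (fderiv ℝ f) := hf.fderiv_right (by norm_num)
    exact (ContinuousLinearMap.apply ℝ ℝ ((0:ℝ), (1:ℝ), (0:ℝ))).contDiff.comp h1
  have hg2c : ContDiff ℝ 1 (pdY f) := by
    have h1 : ContDiff ℝ 1 (fderiv ℝ f) := hf.fderiv_right (by norm_num)
    exact (ContinuousLinearMap.apply ℝ ℝ ((0:ℝ), (0:ℝ), (1:ℝ))).contDiff.comp h1
  have hg1 : Differentiable ℝ (pdX f) := hg1c.differentiable one_ne_zero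
  have hg2 : Differentiable ℝ (pdY f) := hg2c.differentiable one_ne_zero
  set s := α₁ ^ 2 + α₂ ^ 2 with hsdef
  -- first derivatives
  refine ⟨?_, ?_, ?_, ?_⟩
  · show fderiv ℝ _ p (1, 0, 0) = _
    rw [pd_formula α₀ α₁ α₂ t₀ x₀ y₀ α₃ f hfd p (1, 0, 0)]; ring
  · show fderiv ℝ _ p (0, 1, 0) = _
    rw [pd_formula α₀ α₁ α₂ t₀ x₀ y₀ α₃ f hfd p (0, 1, 0)]; ring
  · show fderiv ℝ _ p (0, 0, 1) = _
    rw [pd_formula α₀ α₁ α₂ t₀ x₀ y₀ α₃ f hfd p (0, 0, 1)]; ring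
  -- Laplacian
  · have hXF : pdX (fun p => α₃ * f (Tinv α₀ α₁ α₂ t₀ x₀ y₀ p))
        = fun p' => (α₃ * (α₁ / s)) * pdX f (Tinv α₀ α₁ α₂ t₀ x₀ y₀ p')
            + (α₃ * (α₂ / s)) * pdY f (Tinv α₀ α₁ α₂ t₀ x₀ y₀ p') := by
      funext p'
      show fderiv ℝ _ p' (0, 1, 0) = _
      rw [pd_formula α₀ α₁ α₂ t₀ x₀ y₀ α₃ f hfd p' (0, 1, 0)]; ring
    have hYF : pdY (fun p => α₃ * f (Tinv α₀ α₁ α₂ t₀ x₀ y₀ p))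
        = fun p' => (α₃ * (-α₂ / s)) * pdX f (Tinv α₀ α₁ α₂ t₀ x₀ y₀ p')
            + (α₃ * (α₁ / s)) * pdY f (Tinv α₀ α₁ α₂ t₀ x₀ y₀ p') := by
      funext p'
      show fderiv ℝ _ p' (0, 0, 1) = _
      rw [pd_formula α₀ α₁ α₂ t₀ x₀ y₀ α₃ f hfd p' (0, 0, 1)]; ring
    have hd1 : ∀ c : ℝ, DifferentiableAt ℝ
        (fun p' => c * pdX f (Tinv α₀ α₁ α₂ t₀ x₀ y₀ p')) p :=
      fun c => ((hg1.comp (differentiable_Tinv α₀ α₁ α₂ t₀ x₀ y₀)).const_mul c) p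
    have hd2 : ∀ c : ℝ, DifferentiableAt ℝ
        (fun p' => c * pdY f (Tinv α₀ α₁ α₂ t₀ x₀ y₀ p')) p :=
      fun c => ((hg2.comp (differentiable_Tinv α₀ α₁ α₂ t₀ x₀ y₀)).const_mul c) p
    rw [hXF, hYF]
    show fderiv ℝ _ p (0, 1, 0) + fderiv ℝ _ p (0, 0, 1) = _
    rw [pd_app_add _ _ p (hd1 _) (hd2 _) (0, 1, 0),
        pd_app_add _ _ p (hd1 _) (hd2 _) (0, 0, 1),
        pd_formula α₀ α₁ α₂ t₀ x₀ y₀ _ (pdX f) hg1 p (0, 1, 0),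
        pd_formula α₀ α₁ α₂ t₀ x₀ y₀ _ (pdY f) hg2 p (0, 1, 0),
        pd_formula α₀ α₁ α₂ t₀ x₀ y₀ _ (pdX f) hg1 p (0, 0, 1),
        pd_formula α₀ α₁ α₂ t₀ x₀ y₀ _ (pdY f) hg2 p (0, 0, 1)]
    have hs' : α₁ ^ 2 + α₂ ^ 2 ≠ 0 := hs
    field_simp
    ring

theorem continuous_equivalence_transformations
    (α₀ α₁ α₂ α₃ t₀ x₀ y₀ d₁ d₂ d₃ k : ℝ)
    (hα₀ : 0 < α₀) (hα₃ : 0 < α₃) (hα : α₁ ^ 2 + α₂ ^ 2 ≠ 0)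
    (Ψ : ℝ × ℝ → ℝ) (hΨ : ContDiff ℝ 1 Ψ)
    (u v w : ℝ × ℝ × ℝ → ℝ)
    (hu : ContDiff ℝ 2 u) (hv : ContDiff ℝ 2 v) (hw : ContDiff ℝ 2 w)
    (h : SolvesS Ψ d₁ d₂ d₃ k u v w Set.univ) :
    SolvesS
      (fun q => ((α₁ ^ 2 + α₂ ^ 2) / α₀) * Ψ (sigmaInv α₁ α₂ (q.1 - x₀, q.2 - y₀)))
      (((α₁ ^ 2 + α₂ ^ 2) / α₀) * d₁)
      (((α₁ ^ 2 + α₂ ^ 2) / α₀) * d₂)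
      (((α₁ ^ 2 + α₂ ^ 2) / α₀) * d₃)
      (k / (α₀ * α₃))
      (fun p => α₃ * u (Tinv α₀ α₁ α₂ t₀ x₀ y₀ p))
      (fun p => α₃ * v (Tinv α₀ α₁ α₂ t₀ x₀ y₀ p))
      (fun p => α₃ * w (Tinv α₀ α₁ α₂ t₀ x₀ y₀ p))
      Set.univ := by
  intro p _
  set q := Tinv α₀ α₁ α₂ t₀ x₀ y₀ p with hq
  have hΨd : Differentiable ℝ Ψ := hΨ.differentiable one_ne_zero
  -- stream function derivatives
  have hq2 : q.2 = sigmaInv α₁ α₂ (p.2.1 - x₀, p.2.2 - y₀) := rfl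
  have hpsiX : psiX (fun q => ((α₁ ^ 2 + α₂ ^ 2) / α₀) * Ψ (sigmaInv α₁ α₂ (q.1 - x₀, q.2 - y₀))) p.2
      = (α₁ * psiX Ψ q.2 + α₂ * psiY Ψ q.2) / α₀ := by
    show fderiv ℝ _ p.2 (1, 0) = _
    rw [psi_formula α₁ α₂ x₀ y₀ _ Ψ hΨd p.2 (1, 0), ← hq2]
    field_simp
    ring
  have hpsiY : psiY (fun q => ((α₁ ^ 2 + α₂ ^ 2) / α₀) * Ψ (sigmaInv α₁ α₂ (q.1 - x₀, q.2 - y₀))) p.2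
      = (-(α₂ * psiX Ψ q.2) + α₁ * psiY Ψ q.2) / α₀ := by
    show fderiv ℝ _ p.2 (0, 1) = _
    rw [psi_formula α₁ α₂ x₀ y₀ _ Ψ hΨd p.2 (0, 1), ← hq2]
    field_simp
    ring
  obtain ⟨hu1, hu2, hu3, hu4⟩ := transformed_pds α₀ α₁ α₂ t₀ x₀ y₀ α₃ hα u hu p
  obtain ⟨hv1, hv2, hv3, hv4⟩ := transformed_pds α₀ α₁ α₂ t₀ x₀ y₀ α₃ hα v hv p
  obtain ⟨hw1, hw2, hw3, hw4⟩ := transformed_pds α₀ α₁ α₂ t₀ x₀ y₀ α₃ hα w hw p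
  obtain ⟨he1, he2, he3⟩ := h q trivial
  refine ⟨?_, ?_, ?_⟩
  · rw [hpsiX, hpsiY, hu1, hu2, hu3, hu4]
    have hft : pdT u q = d₁ * (pdX (pdX u) q + pdY (pdY u) q) - k * u q * v q
        - psiY Ψ q.2 * pdX u q + psiX Ψ q.2 * pdY u q := by linarith
    rw [hft]
    field_simp
    ring
  · rw [hpsiX, hpsiY, hv1, hv2, hv3, hv4]
    have hft : pdT v q = d₂ * (pdX (pdX v) q + pdY (pdY v) q) - k * u q * v q
        - psiY Ψ q.2 * pdX v q + psiX Ψ q.2 * pdY v q := by linarith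
    rw [hft]
    field_simp
    ring
  · rw [hpsiX, hpsiY, hw1, hw2, hw3, hw4]
    have hft : pdT w q = d₃ * (pdX (pdX w) q + pdY (pdY w) q) + k * u q * v q
        - psiY Ψ q.2 * pdX w q + psiX Ψ q.2 * pdY w q := by linarith
    rw [hft]
    field_simp
    ring
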